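/- arXiv:1610.09238 — 4 statements merged into one kernel-verified Lean document; each statement's English description precedes it below -/
import Mathlib

section
/- Let k ≥ 2 and m = ℓk with ℓ ≤ −2 an integer, and let s ∈ ℂ. Set a(z) = (z^ℓ + s/z)^k (as a formal Laurent series in z). Then for every integer j ≤ 0 and b = z^j, the Laurent series a′b + k a b′ has lowest-order term k(ℓ + j) z^{m + j − 1}; consequently the map b ↦ a′b + kab′ from ℂ[z^{−1}] (Laurent polynomials in z^{−1}) to ℂ((z))/z^m ℂ[[z]] is surjective onto the polar parts of order more negative than any fixed bound, i.e., the induced map ℂ((z))/zℂ[z] → ℂ((z))/z^m ℂ[z] is surjective. -/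
open Finset

noncomputable def coeffL (k : ℕ) (ℓ : ℤ) (s : ℂ) (b : ℤ →₀ ℂ) (n : ℤ) : ℂ :=
  ∑ j ∈ b.support, ∑ t ∈ Finset.range (k + 1),
    (Nat.choose k t : ℂ) * s ^ t *
      (((ℓ * ((k : ℤ) - (t : ℤ)) - (t : ℤ) + (k : ℤ) * j : ℤ) : ℂ)) *
      (if n = ℓ * ((k : ℤ) - (t : ℤ)) - (t : ℤ) + j - 1 then b j else 0)

noncomputable def ccF (k : ℕ) (ℓ : ℤ) (s : ℂ) (j : ℤ) : ℤ →₀ ℂ :=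
  ∑ t ∈ Finset.range (k + 1),
    Finsupp.single (ℓ * ((k : ℤ) - (t : ℤ)) - (t : ℤ) + j - 1)
      ((Nat.choose k t : ℂ) * s ^ t *
        (((ℓ * ((k : ℤ) - (t : ℤ)) - (t : ℤ) + (k : ℤ) * j : ℤ) : ℂ)))

lemma ccF_apply (k : ℕ) (ℓ : ℤ) (s : ℂ) (j n : ℤ) :
    ccF k ℓ s j n =
      ∑ t ∈ Finset.range (k + 1),
        (Nat.choose k t : ℂ) * s ^ t *
          (((ℓ * ((k : ℤ) - (t : ℤ)) - (t : ℤ) + (k : ℤ) * j : ℤ) : ℂ)) *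
          (if n = ℓ * ((k : ℤ) - (t : ℤ)) - (t : ℤ) + j - 1 then 1 else 0) := by
  rw [ccF, Finsupp.finset_sum_apply]
  refine Finset.sum_congr rfl fun t _ => ?_
  rw [Finsupp.single_apply]
  by_cases h : n = ℓ * ((k : ℤ) - (t : ℤ)) - (t : ℤ) + j - 1
  · simp [h]
  · rw [if_neg (fun h' => h h'.symm), if_neg h, mul_zero]

lemma coeffL_eq_sum (k : ℕ) (ℓ : ℤ) (s : ℂ) (b : ℤ →₀ ℂ) (n : ℤ)
    (S : Finset ℤ) (hS : b.support ⊆ S) :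
    coeffL k ℓ s b n = ∑ j ∈ S, b j * ccF k ℓ s j n := by
  rw [coeffL, Finset.sum_subset hS]
  · refine Finset.sum_congr rfl fun j _ => ?_
    rw [ccF_apply, Finset.mul_sum]
    refine Finset.sum_congr rfl fun t _ => ?_
    split_ifs <;> ring
  · intro j _ hj
    have : b j = 0 := Finsupp.notMem_support_iff.mp hj
    simp [this]

lemma coeffL_single (k : ℕ) (ℓ : ℤ) (s : ℂ) (j : ℤ) (c : ℂ) (n : ℤ) :
    coeffL k ℓ s (Finsupp.single j c) n = c * ccF k ℓ s j n := by
  rw [coeffL_eq_sum k ℓ s _ n {j} Finsupp.support_single_subset,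
    Finset.sum_singleton, Finsupp.single_eq_same]

lemma coeffL_add (k : ℕ) (ℓ : ℤ) (s : ℂ) (b b' : ℤ →₀ ℂ) (n : ℤ) :
    coeffL k ℓ s (b + b') n = coeffL k ℓ s b n + coeffL k ℓ s b' n := by
  rw [coeffL_eq_sum k ℓ s (b + b') n (b.support ∪ b'.support) (Finsupp.support_add),
    coeffL_eq_sum k ℓ s b n (b.support ∪ b'.support) Finset.subset_union_left,
    coeffL_eq_sum k ℓ s b' n (b.support ∪ b'.support) Finset.subset_union_right,
    ← Finset.sum_add_distrib]
  refine Finset.sum_congr rfl fun j _ => ?_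
  rw [Finsupp.add_apply, add_mul]

lemma ccF_diag (k : ℕ) (hk : 2 ≤ k) (ℓ : ℤ) (hℓ : ℓ ≤ -2) (s : ℂ) (j : ℤ) :
    ccF k ℓ s j (ℓ * k + j - 1) = (k : ℂ) * ((ℓ : ℂ) + (j : ℂ)) := by
  rw [ccF_apply]
  rw [Finset.sum_eq_single_of_mem 0 (Finset.mem_range.mpr (Nat.succ_pos k))]
  · rw [if_pos (by push_cast; ring), Nat.choose_zero_right]
    push_cast
    ring
  · intro t _ ht
    have ht' : (1 : ℤ) ≤ (t : ℤ) := by exact_mod_cast Nat.one_le_iff_ne_zero.mpr ht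
    have hne : ℓ * k + j - 1 ≠ ℓ * ((k : ℤ) - (t : ℤ)) - (t : ℤ) + j - 1 := by
      intro h
      nlinarith
    rw [if_neg hne, mul_zero]

lemma ccF_low (k : ℕ) (ℓ : ℤ) (hℓ : ℓ ≤ -2) (s : ℂ) (j n : ℤ)
    (hn : n < ℓ * k + j - 1) : ccF k ℓ s j n = 0 := by
  rw [ccF_apply]
  refine Finset.sum_eq_zero fun t _ => ?_
  have ht : (0 : ℤ) ≤ (t : ℤ) := Int.ofNat_nonneg t
  have hne : n ≠ ℓ * ((k : ℤ) - (t : ℤ)) - (t : ℤ) + j - 1 := by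
    intro h
    nlinarith
  rw [if_neg hne, mul_zero]

lemma key (k : ℕ) (hk : 2 ≤ k) (ℓ : ℤ) (hℓ : ℓ ≤ -2) (s : ℂ) :
    ∀ N : ℕ, ∀ g : ℤ →₀ ℂ, (∀ n ∈ g.support, ℓ * k - N ≤ n ∧ n < ℓ * k) →
      ∃ b : ℤ →₀ ℂ, (∀ j ∈ b.support, j ≤ 0) ∧
        ∀ n : ℤ, n < ℓ * k → coeffL k ℓ s b n = g n := by
  intro N
  induction N with
  | zero =>
    intro g hg
    refine ⟨0, by simp, fun n hn => ?_⟩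
    have hgn : g n = 0 := by
      by_contra h
      have := hg n (Finsupp.mem_support_iff.mpr h)
      omega
    rw [hgn, coeffL]
    simp
  | succ N ih =>
    intro g hg
    set j₀ : ℤ := -(N : ℤ) with hj₀
    set n₀ : ℤ := ℓ * k + j₀ - 1 with hn₀
    have hkC : (k : ℂ) ≠ 0 := Nat.cast_ne_zero.mpr (by omega)
    have hljC : ((ℓ : ℂ) + (j₀ : ℂ)) ≠ 0 := by
      have : ((ℓ + j₀ : ℤ) : ℂ) ≠ 0 := Int.cast_ne_zero.mpr (by omega)
      push_cast at this
      exact this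
    set c : ℂ := g n₀ / ((k : ℂ) * ((ℓ : ℂ) + (j₀ : ℂ))) with hc
    set g' : ℤ →₀ ℂ := Finsupp.filter (fun n => n < ℓ * k) (g - c • ccF k ℓ s j₀) with hg'
    have hg'app : ∀ n : ℤ, n < ℓ * k → g' n = g n - c * ccF k ℓ s j₀ n := by
      intro n hn
      rw [hg', Finsupp.filter_apply, if_pos hn, Finsupp.sub_apply, Finsupp.smul_apply,
        smul_eq_mul]
    have hsupp : ∀ n ∈ g'.support, ℓ * k - (N : ℤ) ≤ n ∧ n < ℓ * k := by
      intro n hn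
      have hn' : g' n ≠ 0 := Finsupp.mem_support_iff.mp hn
      have hlt : n < ℓ * k := by
        by_contra h
        apply hn'
        rw [hg', Finsupp.filter_apply, if_neg h]
      refine ⟨?_, hlt⟩
      by_contra h
      push_neg at h
      apply hn'
      rw [hg'app n hlt]
      rcases lt_or_eq_of_le (by omega : n ≤ n₀) with h' | h'
      · have hgn : g n = 0 := by
          by_contra hgg
          have := hg n (Finsupp.mem_support_iff.mpr hgg)
          omega
        rw [hgn, ccF_low k ℓ hℓ s j₀ n (by omega), mul_zero, sub_zero]
      · rw [h', hn₀, ccF_diag k hk ℓ hℓ s j₀, hc]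
        field_simp
        rw [hn₀, sub_self]
    obtain ⟨b', hb'supp, hb'⟩ := ih g' hsupp
    refine ⟨b' + Finsupp.single j₀ c, ?_, ?_⟩
    · intro j hj
      have := Finsupp.support_add hj
      rcases Finset.mem_union.mp this with h | h
      · exact hb'supp j h
      · have := Finsupp.support_single_subset h
        rw [Finset.mem_singleton] at this
        omega
    · intro n hn
      rw [coeffL_add, hb' n hn, coeffL_single, hg'app n hn]
      ring

/-- For `k ≥ 2`, `m = ℓk` with `ℓ ≤ -2`, `a(z) = (z^ℓ + s/z)^k`: for every `j ≤ 0` and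
`b = z^j`, the series `a'b + kab'` has lowest-order term `k(ℓ+j) z^{m+j-1}`; consequently the
induced map `ℂ((z))/zℂ[z] → ℂ((z))/z^m ℂ[z]`, `b ↦ a'b + kab'`, is surjective. -/
theorem stmt9 (k : ℕ) (hk : 2 ≤ k) (ℓ : ℤ) (hℓ : ℓ ≤ -2) (s : ℂ) :
    (∀ j : ℤ, j ≤ 0 →
      coeffL k ℓ s (Finsupp.single j 1) (ℓ * k + j - 1) = (k : ℂ) * ((ℓ : ℂ) + (j : ℂ)) ∧
      ∀ n : ℤ, n < ℓ * k + j - 1 → coeffL k ℓ s (Finsupp.single j 1) n = 0) ∧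
    (∀ g : ℤ →₀ ℂ, (∀ n ∈ g.support, n < ℓ * k) →
      ∃ b : ℤ →₀ ℂ, (∀ j ∈ b.support, j ≤ 0) ∧
        ∀ n : ℤ, n < ℓ * k → coeffL k ℓ s b n = g n) := by
  constructor
  · intro j hj
    constructor
    · rw [coeffL_single, ccF_diag k hk ℓ hℓ s j, one_mul]
    · intro n hn
      rw [coeffL_single, ccF_low k ℓ hℓ s j n hn, mul_zero]
  · intro g hg
    rcases Finset.eq_empty_or_nonempty g.support with he | ⟨n₁, hn₁⟩
    · refine ⟨0, by simp, fun n hn => ?_⟩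
      have : g n = 0 := Finsupp.notMem_support_iff.mp (by rw [he]; exact Finset.notMem_empty n)
      rw [this, coeffL]; simp
    · obtain ⟨m, hm⟩ := g.support.exists_min_image id ⟨n₁, hn₁⟩
      obtain ⟨hmS, hmin⟩ := hm
      obtain ⟨N, hN⟩ : ∃ N : ℕ, ℓ * k - (N : ℤ) ≤ m := ⟨(ℓ * k - m).toNat, by omega⟩
      refine key k hk ℓ hℓ s N g fun n hn => ⟨le_trans hN (hmin n hn), hg n hn⟩
end

section
/- Let k ≥ 1, m ∈ ℤ with m > −k or k ∤ m, and let ξ = w^m(a_0 + a_1 w + ⋯)(dw)^k be a k-differential germ at 0 with a_0 ≠ 0 (convergent power series). Then there exists a germ of biholomorphism φ fixing 0 such that φ*(ξ) = z^m (dz)^k, and the germ of φ is unique up to multiplication by an (m+k)-th root of unity. -/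
open Topology Filter
open scoped ENNReal NNReal



private lemma aderiv {f : ℂ → ℂ} {x : ℂ} (hf : AnalyticAt ℂ f x) : AnalyticAt ℂ (deriv f) x := by
  obtain ⟨s, hs, hf'⟩ := hf.eventually_analyticAt.exists_mem
  have hs' : x ∈ interior s := mem_interior_iff_mem_nhds.mpr hs
  have h2 : AnalyticOnNhd ℂ f (interior s) := fun z hz => hf' z (interior_subset hz)
  exact h2.deriv x hs'

private lemma azpow {g : ℂ → ℂ} {x : ℂ} (hg : AnalyticAt ℂ g x) (h0 : g x ≠ 0) (n : ℤ) :
    AnalyticAt ℂ (fun z => g z ^ n) x := by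
  cases n with
  | ofNat j => simpa using hg.fun_pow j
  | negSucc j =>
      have : (fun z => g z ^ (Int.negSucc j)) = fun z => (g z ^ (j+1))⁻¹ := by
        funext z; rw [zpow_negSucc]
      rw [this]
      exact (hg.pow (j+1)).inv (pow_ne_zero _ h0)

private lemma aux_root (n : ℤ) (hn : n ≠ 0) {g : ℂ → ℂ} (hg : AnalyticAt ℂ g 0) (h0 : g 0 ≠ 0) :
    ∃ E : ℂ → ℂ, AnalyticAt ℂ E 0 ∧ (∀ z, E z ≠ 0) ∧ ∀ᶠ z in 𝓝 (0:ℂ), E z ^ n = g z := by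
  refine ⟨fun z => Complex.exp ((Complex.log (g 0) + Complex.log (g z / g 0)) / n), ?_, fun z => Complex.exp_ne_zero _, ?_⟩
  · apply analyticAt_cexp.comp
    apply AnalyticAt.div _ analyticAt_const (by exact_mod_cast (Int.cast_ne_zero (α := ℂ)).mpr hn)
    apply AnalyticAt.add analyticAt_const
    apply (analyticAt_clog ?_).comp ((hg.div analyticAt_const h0))
    · simp [div_self h0, Complex.one_mem_slitPlane]
  · have : ∀ᶠ z in 𝓝 (0:ℂ), g z ≠ 0 := hg.continuousAt.eventually_ne h0
    filter_upwards [this] with z hz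
    rw [← Complex.exp_int_mul]
    rw [mul_div_cancel₀]
    · rw [Complex.exp_add, Complex.exp_log h0, Complex.exp_log (div_ne_zero hz h0)]
      field_simp
    · exact_mod_cast (Int.cast_ne_zero (α := ℂ)).mpr hn



private lemma aux_ode (k : ℕ) (n : ℤ) (hnz : ∀ j : ℕ, n + k * j ≠ 0) {Q : ℂ → ℂ}
    (hQ : AnalyticAt ℂ Q 0) :
    ∃ W : ℂ → ℂ, AnalyticAt ℂ W 0 ∧ W 0 = Q 0 ∧
      ∀ᶠ z in 𝓝 (0:ℂ), (n:ℂ) * W z + (k:ℂ) * z * deriv W z = (n:ℂ) * Q z := by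
  obtain ⟨p, hp⟩ := hQ
  obtain ⟨rp, hpb⟩ := hp
  -- choose r < rp
  obtain ⟨r, hr0, hrrp⟩ := ENNReal.lt_iff_exists_nnreal_btwn.mp hpb.r_pos
  have hr0' : (0:ℝ) < r := by exact_mod_cast hr0
  have hrrad : (r : ℝ≥0∞) < p.radius := lt_of_lt_of_le hrrp hpb.r_le
  obtain ⟨a, ha, C, hC, hbound⟩ := p.norm_mul_pow_le_mul_pow_of_lt_radius hrrad
  -- coefficients
  set q : ℕ → ℂ := fun j => p.coeff j with hq
  have hqn : ∀ j, ‖q j‖ ≤ ‖p j‖ := by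
    intro j
    have h := (p j).le_opNorm (1 : Fin j → ℂ)
    simp only [Pi.one_apply, norm_one, Finset.prod_const, one_pow, mul_one] at h
    exact h
  set σ : ℕ → ℂ := fun j => ((n : ℂ) / ((n : ℂ) + (k : ℂ) * (j : ℂ))) * q j with hσ
  have hden : ∀ j : ℕ, ((n : ℂ) + (k : ℂ) * (j : ℂ)) ≠ 0 := by
    intro j
    have := hnz j
    have : ((n + k * j : ℤ) : ℂ) ≠ 0 := Int.cast_ne_zero.mpr this
    push_cast at this
    convert this using 2 <;> push_cast <;> ring
  have hσn : ∀ j, ‖σ j‖ ≤ (|n| : ℝ) * ‖p j‖ := by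
    intro j
    have h1 : ‖((n : ℂ) + (k : ℂ) * (j : ℂ))‖ ≥ 1 := by
      have : ((n + k * j : ℤ) : ℂ) = (n : ℂ) + (k : ℂ) * (j : ℂ) := by push_cast; ring
      rw [← this]
      rw [Complex.norm_intCast]
      exact_mod_cast Int.one_le_abs (hnz j)
    have h2 : ‖(n : ℂ) / ((n : ℂ) + (k : ℂ) * (j : ℂ))‖ ≤ (|n| : ℝ) := by
      rw [norm_div]
      have := div_le_self (norm_nonneg ((n:ℂ))) h1
      simpa [Complex.norm_intCast] using this
    calc ‖σ j‖ = ‖(n : ℂ) / ((n : ℂ) + (k : ℂ) * (j : ℂ))‖ * ‖q j‖ := norm_mul _ _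
      _ ≤ (|n| : ℝ) * ‖p j‖ := mul_le_mul h2 (hqn j) (norm_nonneg _) (by positivity)
  -- summable bound for derivatives
  set u : ℕ → ℝ := fun j => (|(n:ℝ)| * C / r) * ((j:ℝ) * a ^ j) with hu
  have ha1 : ‖a‖ < 1 := by rw [Real.norm_eq_abs, abs_of_pos ha.1]; exact ha.2
  have hsum_u : Summable u := by
    apply Summable.mul_left
    have := summable_pow_mul_geometric_of_norm_lt_one 1 ha1
    simpa using this
  set g : ℕ → ℂ → ℂ := fun j z => σ j * z ^ j with hgdef
  set g' : ℕ → ℂ → ℂ := fun j z => σ j * ((j:ℂ) * z ^ (j-1)) with hg'def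
  have hderiv : ∀ j z, HasDerivAt (g j) (g' j z) z := fun j z =>
    (hasDerivAt_pow j z).const_mul (σ j)
  have hpj : ∀ j : ℕ, ‖p j‖ * (r:ℝ) ^ j ≤ C * a ^ j := fun j => hbound j
  have hbound' : ∀ j z, z ∈ Metric.ball (0:ℂ) r → ‖g' j z‖ ≤ u j := by
    intro j z hz
    have hzr : ‖z‖ ≤ (r:ℝ) := le_of_lt (by simpa [Metric.mem_ball] using hz)
    rcases Nat.eq_zero_or_pos j with hj | hj
    · subst hj; simp [hg'def, hu]
    · have h1 : ‖g' j z‖ ≤ ((|n|:ℝ) * ‖p j‖) * ((j:ℝ) * (r:ℝ) ^ (j-1)) := by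
        rw [hg'def]
        simp only [norm_mul, Complex.norm_natCast, norm_pow]
        have hz2 : ‖z‖ ^ (j-1) ≤ (r:ℝ) ^ (j-1) := pow_le_pow_left₀ (norm_nonneg z) hzr (j-1)
        exact mul_le_mul (hσn j)
          (mul_le_mul_of_nonneg_left hz2 (by positivity)) (by positivity) (by positivity)
      refine h1.trans ?_
      rw [hu]
      have h2 : ‖p j‖ * (r:ℝ) ^ (j-1) ≤ C * a ^ j / r := by
        rw [le_div_iff₀ hr0']
        calc ‖p j‖ * (r:ℝ) ^ (j-1) * r = ‖p j‖ * (r:ℝ) ^ j := by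
              rw [mul_assoc, ← pow_succ, Nat.sub_add_cancel hj]
          _ ≤ C * a ^ j := hpj j
      calc ((|n|:ℝ) * ‖p j‖) * ((j:ℝ) * (r:ℝ) ^ (j-1)) = (j:ℝ) * ((|n|:ℝ) * (‖p j‖ * (r:ℝ)^(j-1))) := by ring
        _ ≤ (j:ℝ) * ((|n|:ℝ) * (C * a ^ j / r)) := by
            apply mul_le_mul_of_nonneg_left ?_ (by positivity)
            exact mul_le_mul_of_nonneg_left h2 (by positivity)
        _ = u j := by rw [hu]; ring
  have hg0 : Summable fun j => g j 0 := by
    apply summable_of_ne_finset_zero (s := {0})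
    intro j hj
    have hj' : j ≠ 0 := by simpa using hj
    simp [hgdef, zero_pow hj']
  set W : ℂ → ℂ := fun z => ∑' j, g j z with hWdef
  set D : ℂ → ℂ := fun z => ∑' j, g' j z with hDdef
  have hball : Metric.ball (0:ℂ) r ∈ 𝓝 (0:ℂ) := Metric.ball_mem_nhds 0 hr0'
  have hW : ∀ y ∈ Metric.ball (0:ℂ) r, HasDerivAt W (D y) y := by
    intro y hy
    exact hasDerivAt_tsum_of_isPreconnected hsum_u Metric.isOpen_ball
      (convex_ball (0:ℂ) (r:ℝ)).isPreconnected (fun j z hz => hderiv j z)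
      hbound' (Metric.mem_ball_self hr0') hg0 hy
  have hWa : AnalyticAt ℂ W 0 := by
    apply DifferentiableOn.analyticAt (s := Metric.ball (0:ℂ) r) ?_ hball
    exact fun y hy => ((hW y hy).differentiableAt).differentiableWithinAt
  have hn0 : (n:ℂ) ≠ 0 := by
    have := hden 0
    simpa using this
  have hσq0 : σ 0 = q 0 := by
    rw [hσ]; simp [div_self hn0]
  have hq0 : q 0 = Q 0 := by
    have h1 := hpb.coeff_zero (fun _ => (0:ℂ))
    have h2 : q 0 = p 0 (fun _ => (0:ℂ)) := by
      show p.coeff 0 = _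
      exact congrArg (p 0) (Subsingleton.elim _ _)
    rw [h2, h1]
  have hW0 : W 0 = Q 0 := by
    have ht : (∑' j, g j 0) = g 0 0 := by
      apply tsum_eq_single 0
      intro j hj
      rw [hgdef]
      simp [zero_pow hj]
    have hg00 : g 0 0 = Q 0 := by rw [hgdef]; simp only [pow_zero, mul_one]; rw [hσq0, hq0]
    show (∑' j, g j 0) = Q 0
    rw [ht, hg00]
  refine ⟨W, hWa, hW0, ?_⟩
  filter_upwards [hball] with z hz
  have hzr : ‖z‖ < (r:ℝ) := by simpa [Metric.mem_ball] using hz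
  have Sg : Summable fun j => g j z := by
    apply Summable.of_norm_bounded (g := fun j => (|n|:ℝ) * C * a ^ j)
    · exact (summable_geometric_of_lt_one ha.1.le ha.2).mul_left _
    · intro j
      calc ‖g j z‖ = ‖σ j‖ * ‖z‖^j := by rw [hgdef]; simp
        _ ≤ ((|n|:ℝ) * ‖p j‖) * (r:ℝ)^j :=
            mul_le_mul (hσn j) (pow_le_pow_left₀ (norm_nonneg z) hzr.le j)
              (by positivity) (by positivity)
        _ = (|n|:ℝ) * (‖p j‖ * (r:ℝ)^j) := by ring
        _ ≤ (|n|:ℝ) * (C * a^j) := mul_le_mul_of_nonneg_left (hpj j) (by positivity)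
        _ = (|n|:ℝ) * C * a^j := by ring
  have SD : Summable fun j => g' j z :=
    Summable.of_norm_bounded hsum_u (fun j => hbound' j z hz)
  have hQz : HasSum (fun j => q j * z ^ j) (Q z) := by
    have hmem : z ∈ Metric.eball (0:ℂ) rp := by
      rw [Metric.mem_eball, edist_zero_right]
      calc (‖z‖₊ : ℝ≥0∞) < (r : ℝ≥0∞) := by exact_mod_cast hzr
        _ < rp := hrrp
    have hs := hpb.hasSum (y := z) (by simpa using hmem)
    simp only [zero_add] at hs
    have heq : (fun j => p j fun _ => z) = fun j => q j * z ^ j := by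
      funext j
      show (p j fun _ => z) = q j * z ^ j
      rw [FormalMultilinearSeries.apply_eq_pow_smul_coeff, smul_eq_mul]
      show z ^ j * p.coeff j = _
      ring
    rwa [heq] at hs
  have hA : HasSum (fun j => (n:ℂ) * g j z) ((n:ℂ) * W z) := Sg.hasSum.mul_left _
  have hB : HasSum (fun j => ((k:ℂ) * z) * g' j z) (((k:ℂ) * z) * D z) := SD.hasSum.mul_left _
  have hAB := hA.add hB
  have hfun : (fun j => (n:ℂ) * g j z + ((k:ℂ) * z) * g' j z)
      = fun j => (n:ℂ) * (q j * z ^ j) := by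
    funext j
    rcases Nat.eq_zero_or_pos j with hj | hj
    · subst hj
      simp [hgdef, hg'def, hσq0]
    · rw [hgdef, hg'def]
      simp only
      have hzz : z * z ^ (j-1) = z ^ j := by
        rw [← pow_succ', Nat.sub_add_cancel hj]
      have hkey : ((n:ℂ) + (k:ℂ) * (j:ℂ)) * σ j = (n:ℂ) * q j := by
        show ((n:ℂ) + (k:ℂ) * (j:ℂ)) * ((n:ℂ) / ((n:ℂ) + (k:ℂ) * (j:ℂ)) * q j) = (n:ℂ) * q j
        calc ((n:ℂ) + (k:ℂ) * (j:ℂ)) * ((n:ℂ) / ((n:ℂ) + (k:ℂ) * (j:ℂ)) * q j)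
            = ((n:ℂ) / ((n:ℂ) + (k:ℂ) * (j:ℂ)) * ((n:ℂ) + (k:ℂ) * (j:ℂ))) * q j := by ring
          _ = (n:ℂ) * q j := by rw [div_mul_cancel₀ _ (hden j)]
      calc (n:ℂ) * (σ j * z ^ j) + (k:ℂ) * z * (σ j * ((j:ℂ) * z ^ (j-1)))
          = ((n:ℂ) + (k:ℂ) * (j:ℂ)) * σ j * z ^ j := by rw [← hzz]; ring
        _ = (n:ℂ) * (q j * z ^ j) := by rw [hkey]; ring
  rw [hfun] at hAB
  have hfin := hAB.unique (hQz.mul_left ((n:ℂ)))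
  rw [(hW z hz).deriv]
  exact hfin



private lemma aux_inv {f : ℂ → ℂ} (hf : AnalyticAt ℂ f 0) (hf0 : f 0 = 0) (hd : deriv f 0 ≠ 0) :
    ∃ g : ℂ → ℂ, AnalyticAt ℂ g 0 ∧ g 0 = 0 ∧ deriv g 0 ≠ 0 ∧
      (∀ᶠ z in 𝓝 (0:ℂ), g (f z) = z) ∧ (∀ᶠ y in 𝓝 (0:ℂ), f (g y) = y) := by
  obtain ⟨p, hp⟩ := hf
  have hsd : HasStrictDerivAt f (deriv f 0) 0 := by
    have h1 := hp.hasStrictDerivAt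
    have h2 : deriv f 0 = ((p 1) fun _ => 1) := h1.hasDerivAt.deriv
    rw [h2]
    exact h1
  set e : ℂ ≃L[ℂ] ℂ := ContinuousLinearEquiv.unitsEquivAut ℂ (Units.mk0 _ hd) with he
  have hsf : HasStrictFDerivAt f (e : ℂ →L[ℂ] ℂ) 0 := hsd.hasStrictFDerivAt_equiv hd
  set P := hsf.toOpenPartialHomeomorph f with hP
  set g : ℂ → ℂ := hsf.localInverse f _ 0 with hg
  have hleft : ∀ᶠ z in 𝓝 (0:ℂ), g (f z) = z := hsf.eventually_left_inverse
  have hright : ∀ᶠ y in 𝓝 (f 0), f (g y) = y := hsf.eventually_right_inverse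
  rw [hf0] at hright
  have hg0 : g 0 = 0 := by
    have := hleft.self_of_nhds
    rwa [hf0] at this
  have hgd : HasStrictDerivAt g (deriv f 0)⁻¹ 0 := by
    have := hsd.to_localInverse (hf' := hd)
    rwa [hf0] at this
  have hga : AnalyticAt ℂ g 0 := by
    have hPa : AnalyticAt ℂ P 0 := by
      rw [hP, hsf.toOpenPartialHomeomorph_coe]
      exact ⟨p, hp⟩
    have hsym : AnalyticAt ℂ P.symm (P 0) := by
      apply P.analyticAt_symm' (i := e) hsf.mem_toOpenPartialHomeomorph_source hPa
      · have : fderiv ℂ f 0 = (e : ℂ →L[ℂ] ℂ) := hsf.hasFDerivAt.fderiv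
        rw [← this]
        congr 1
    have hP00 : P 0 = 0 := by
      show f 0 = 0
      exact hf0
    rw [hP00] at hsym
    exact hsym.congr (by filter_upwards with y using rfl)
  exact ⟨g, hga, hg0, by rw [hgd.hasDerivAt.deriv]; exact inv_ne_zero hd, hleft, hright⟩

private lemma aux_binom (k : ℕ) (s : ℂ) (d : ℕ) (hd : 1 ≤ d) {c : ℂ → ℂ}
    (hc : AnalyticAt ℂ c 0) :
    ∃ B : ℂ → ℂ, AnalyticAt ℂ B 0 ∧ B 0 = k * s ^ (k-1) * c 0 ∧
      ∀ u, (s + u ^ d * c u) ^ k = s ^ k + u ^ d * B u := by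
  induction k with
  | zero => exact ⟨fun _ => 0, analyticAt_const, by simp, by simp⟩
  | succ k ih =>
      obtain ⟨B, hBa, hB0, hBeq⟩ := ih
      refine ⟨fun u => c u * s ^ k + s * B u + u ^ d * (c u * B u), ?_, ?_, ?_⟩
      · exact ((hc.mul analyticAt_const).add (analyticAt_const.mul hBa)).add
          (((analyticAt_id.pow d)).mul (hc.mul hBa))
      · have hzd : (0:ℂ) ^ d = 0 := zero_pow (by omega)
        show c 0 * s ^ k + s * B 0 + (0:ℂ) ^ d * (c 0 * B 0) = (↑(k+1)) * s ^ (k+1-1) * c 0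
        rw [hzd, hB0]
        rcases Nat.eq_zero_or_pos k with hk | hk
        · subst hk; simp
        · have hkk : k - 1 + 1 = k := Nat.sub_add_cancel hk
          rw [Nat.add_sub_cancel]
          push_cast
          calc c 0 * s ^ k + s * ((k:ℂ) * s ^ (k-1) * c 0) + 0 * (c 0 * ((k:ℂ) * s^(k-1) * c 0))
              = c 0 * s ^ k + (k:ℂ) * (s ^ (k-1) * s) * c 0 := by ring
            _ = ((k:ℂ)+1) * s ^ k * c 0 := by rw [← pow_succ, hkk]; ring
      · intro u
        have : (s + u ^ d * c u) ^ (k+1) = (s + u ^ d * c u) ^ k * (s + u ^ d * c u) := by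
          rw [pow_succ]
        rw [this, hBeq u]
        ring

private lemma aux_rigid (k : ℕ) (hk : 1 ≤ k) (m : ℤ)
    (hnz : ∀ j : ℕ, (m + (k:ℤ)) + k * j ≠ 0)
    {ψ : ℂ → ℂ} (hψ : AnalyticAt ℂ ψ 0) (hψ0 : ψ 0 = 0) (hψd : deriv ψ 0 ≠ 0)
    (heq : ∀ᶠ u in 𝓝[≠] (0:ℂ), ψ u ^ m * (deriv ψ u) ^ k = u ^ m) :
    (deriv ψ 0) ^ (m + (k:ℤ)) = 1 ∧ ∀ᶠ u in 𝓝 (0:ℂ), ψ u = deriv ψ 0 * u := by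
  set n : ℤ := m + k with hn
  have hnZ : n ≠ 0 := by simpa using hnz 0
  have hn0 : (n:ℂ) ≠ 0 := Int.cast_ne_zero.mpr hnZ
  obtain ⟨p, hp⟩ := hψ
  set g : ℂ → ℂ := dslope ψ 0 with hgdef
  have hga : AnalyticAt ℂ g 0 := (hp.has_fpower_series_dslope_fslope).analyticAt
  have hg0 : g 0 = deriv ψ 0 := dslope_same ψ 0
  have hg0ne : g 0 ≠ 0 := by rw [hg0]; exact hψd
  have hfac : ∀ u, ψ u = u * g u := by
    intro u
    have h1 := sub_smul_dslope ψ 0 u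
    rw [hψ0, sub_zero, sub_zero, smul_eq_mul] at h1
    exact h1.symm
  have hgea : ∀ᶠ u in 𝓝 (0:ℂ), AnalyticAt ℂ g u := hga.eventually_analyticAt
  have hgne : ∀ᶠ u in 𝓝 (0:ℂ), g u ≠ 0 := hga.continuousAt.eventually_ne hg0ne
  have hda : AnalyticAt ℂ (deriv g) 0 := aderiv hga
  have hdψ : ∀ᶠ u in 𝓝 (0:ℂ), deriv ψ u = g u + u * deriv g u := by
    filter_upwards [hgea] with u hu
    have h1 : HasDerivAt (fun z => z * g z) (1 * g u + u * deriv g u) u :=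
      (hasDerivAt_id u).mul hu.differentiableAt.hasDerivAt
    have h2 : deriv ψ u = deriv (fun z => z * g z) u := by
      apply Filter.EventuallyEq.deriv_eq
      filter_upwards with z using hfac z
    rw [h2, h1.deriv]; ring
  have hE : ∀ᶠ u in 𝓝[≠] (0:ℂ), g u ^ m * (g u + u * deriv g u) ^ k = 1 := by
    filter_upwards [heq, hdψ.filter_mono nhdsWithin_le_nhds,
      eventually_mem_nhdsWithin] with u hu hdu hu0
    have hu0' : (u:ℂ) ≠ 0 := hu0
    rw [hfac u, mul_zpow, hdu, mul_assoc] at hu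
    have hum : (u:ℂ) ^ m ≠ 0 := zpow_ne_zero _ hu0'
    exact mul_left_cancel₀ hum (hu.trans (mul_one _).symm)
  have hAa : AnalyticAt ℂ (fun u => g u ^ m * (g u + u * deriv g u) ^ k - 1) 0 :=
    ((azpow hga hg0ne m).mul ((hga.add (analyticAt_id.mul hda)).pow k)).sub analyticAt_const
  have hE' : ∀ᶠ u in 𝓝 (0:ℂ), g u ^ m * (g u + u * deriv g u) ^ k = 1 := by
    have hfreq : ∃ᶠ u in 𝓝[≠] (0:ℂ), g u ^ m * (g u + u * deriv g u) ^ k - 1 = 0 :=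
      (hE.mono fun u hu => by rw [hu, sub_self]).frequently
    have h2 := hAa.frequently_zero_iff_eventually_zero.mp hfreq
    filter_upwards [h2] with u hu
    exact sub_eq_zero.mp hu
  set G : ℂ → ℂ := fun u => g u ^ n with hGdef
  have hGa : AnalyticAt ℂ G 0 := azpow hga hg0ne n
  have hG0 : G 0 = deriv ψ 0 ^ n := by rw [hGdef]; simp only; rw [hg0]
  have hG0ne : G 0 ≠ 0 := by rw [hG0]; exact zpow_ne_zero _ hψd
  have hdG : ∀ᶠ u in 𝓝 (0:ℂ), deriv G u = (n:ℂ) * g u ^ (n-1) * deriv g u := by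
    filter_upwards [hgea, hgne] with u hu hune
    have h1 : HasDerivAt (fun w : ℂ => w ^ n) ((n:ℂ) * g u ^ (n-1)) (g u) :=
      hasDerivAt_zpow n (g u) (Or.inl hune)
    have h2 := h1.comp u hu.differentiableAt.hasDerivAt
    have h3 : HasDerivAt G ((n:ℂ) * g u ^ (n-1) * deriv g u) u := h2
    exact h3.deriv
  have hGeq : ∀ᶠ u in 𝓝 (0:ℂ), ((n:ℂ) * G u + u * deriv G u) ^ k
      = (n:ℂ)^k * G u ^ (k-1) := by
    filter_upwards [hE', hgne, hdG] with u hE1 hg1 hd1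
    rw [hd1, hGdef]
    simp only
    have e0 : g u ^ n = g u ^ (n-1) * g u := by
      rw [← zpow_add_one₀ hg1, sub_add_cancel]
    have hgm : g u ^ m ≠ 0 := zpow_ne_zero _ hg1
    have e2 : (g u + u * deriv g u) ^ k = g u ^ (-m) := by
      apply mul_left_cancel₀ hgm
      rw [hE1, ← zpow_add₀ hg1]
      simp
    have e1 : (n:ℂ) * g u ^ n + u * ((n:ℂ) * g u ^ (n-1) * deriv g u)
        = ((n:ℂ) * g u ^ (n-1)) * (g u + u * deriv g u) := by
      rw [e0]; ring
    rw [e1, mul_pow, e2, mul_pow, mul_assoc]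
    congr 1
    rw [← zpow_natCast (g u ^ (n-1)) k, ← zpow_mul, ← zpow_natCast (g u ^ n) (k-1), ← zpow_mul,
      ← zpow_add₀ hg1]
    congr 1
    rw [hn]
    push_cast [Nat.cast_sub hk]
    ring
  have h0 := hGeq.self_of_nhds
  rw [zero_mul, add_zero, mul_pow] at h0
  have hG01 : G 0 = 1 := by
    have hkk : k - 1 + 1 = k := Nat.sub_add_cancel hk
    have h1 : (n:ℂ)^k * (G 0 ^ (k-1) * G 0) = (n:ℂ)^k * (G 0 ^ (k-1) * 1) := by
      rw [← pow_succ, hkk, mul_one]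
      exact h0
    have h2 := mul_left_cancel₀ (pow_ne_zero k hn0) h1
    exact mul_left_cancel₀ (pow_ne_zero (k-1) hG0ne) h2
  have part1 : (deriv ψ 0) ^ (m + (k:ℤ)) = 1 := by rw [← hn, ← hG0]; exact hG01
  -- G is eventually constant 1
  have hGconst : ∀ᶠ u in 𝓝 (0:ℂ), G u = 1 := by
    by_contra hcon
    have hGm1 : AnalyticAt ℂ (fun u => G u - 1) 0 := hGa.sub analyticAt_const
    have hne : ¬ ∀ᶠ u in 𝓝 (0:ℂ), G u - 1 = 0 := by
      intro hcc
      exact hcon (hcc.mono fun u hu => sub_eq_zero.mp hu)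
    have hord : analyticOrderAt (fun u => G u - 1) 0 ≠ ⊤ := fun hh => hne (analyticOrderAt_eq_top.mp hh)
    obtain ⟨d, hd⟩ : ∃ d : ℕ, analyticOrderAt (fun u => G u - 1) 0 = (d : ℕ∞) := by
      cases ho : analyticOrderAt (fun u => G u - 1) 0 with
      | top => exact absurd ho hord
      | coe d => exact ⟨d, rfl⟩
    obtain ⟨w, hwa, hw0, hwev⟩ := (hGm1.analyticOrderAt_eq_natCast (n := d)).mp hd
    have hwev' : ∀ᶠ u in 𝓝 (0:ℂ), G u = 1 + u ^ d * w u := by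
      filter_upwards [hwev] with u hu
      rw [sub_zero, smul_eq_mul] at hu
      linear_combination hu
    have hd1 : 1 ≤ d := by
      by_contra hdd
      have hd0 : d = 0 := by omega
      subst hd0
      have := hwev'.self_of_nhds
      rw [hG01] at this
      simp at this
      exact hw0 this
    set c : ℂ → ℂ := fun u => (n:ℂ) * w u + (d:ℂ) * w u + u * deriv w u with hcdef
    have hca : AnalyticAt ℂ c 0 :=
      ((analyticAt_const.mul hwa).add (analyticAt_const.mul hwa)).add
        (analyticAt_id.mul (aderiv hwa))
    have hc0 : c 0 = ((n:ℂ) + (d:ℂ)) * w 0 := by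
      show (n:ℂ) * w 0 + (d:ℂ) * w 0 + 0 * deriv w 0 = ((n:ℂ) + (d:ℂ)) * w 0
      ring
    obtain ⟨B, hBa, hB0, hBeq⟩ := aux_binom k ((n:ℂ)) d hd1 hca
    obtain ⟨Cf, hCa, hC0, hCeq⟩ := aux_binom (k-1) 1 d hd1 hwa
    have hwea : ∀ᶠ u in 𝓝 (0:ℂ), AnalyticAt ℂ w u := hwa.eventually_analyticAt
    have hdGw : ∀ᶠ u in 𝓝 (0:ℂ), deriv G u = (d:ℂ) * u^(d-1) * w u + u^d * deriv w u := by
      filter_upwards [hwev'.eventually_nhds, hwea] with u hu hwu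
      have h1 : HasDerivAt (fun z => 1 + z^d * w z)
          (((d:ℂ) * u^(d-1)) * w u + u^d * deriv w u) u := by
        have := (hasDerivAt_pow d u).mul hwu.differentiableAt.hasDerivAt
        exact this.const_add 1
      have h2 : deriv G u = deriv (fun z => 1 + z^d * w z) u :=
        Filter.EventuallyEq.deriv_eq hu
      rw [h2, h1.deriv]
    have hcomb : ∀ᶠ u in 𝓝 (0:ℂ), (n:ℂ) * G u + u * deriv G u = (n:ℂ) + u^d * c u := by
      filter_upwards [hwev', hdGw] with u h1 h2
      rw [h1, h2, hcdef]
      simp only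
      have hud : u * u^(d-1) = u^d := by
        rw [← pow_succ', Nat.sub_add_cancel hd1]
      linear_combination ((d:ℂ) * w u) * hud
    have hfinal : ∀ᶠ u in 𝓝 (0:ℂ), u^d * B u = u^d * ((n:ℂ)^k * Cf u) := by
      filter_upwards [hGeq, hcomb, hwev'] with u h1 h2 h3
      rw [h2, hBeq u, h3, hCeq u, one_pow] at h1
      linear_combination h1
    have hBC : AnalyticAt ℂ (fun u => B u - (n:ℂ)^k * Cf u) 0 :=
      hBa.sub (analyticAt_const.mul hCa)
    have hev0 : ∀ᶠ u in 𝓝 (0:ℂ), B u - (n:ℂ)^k * Cf u = 0 := by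
      apply hBC.frequently_zero_iff_eventually_zero.mp
      apply Filter.Eventually.frequently
      filter_upwards [hfinal.filter_mono nhdsWithin_le_nhds,
        eventually_mem_nhdsWithin] with u hu hu0
      have hu0' : (u:ℂ) ≠ 0 := hu0
      have := mul_left_cancel₀ (pow_ne_zero d hu0') hu
      rw [this, sub_self]
    have h00 := hev0.self_of_nhds
    rw [hB0, hC0, hc0, one_pow, sub_eq_zero] at h00
    -- (k:ℂ) * n^(k-1) * ((n + d) * w 0) = n^k * ((k-1) * w 0)
    have hnk : (n:ℂ)^k = (n:ℂ)^(k-1) * (n:ℂ) := by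
      rw [← pow_succ, Nat.sub_add_cancel hk]
    have hstep : (n:ℂ)^(k-1) * ((k:ℂ) * ((n:ℂ) + (d:ℂ)) * w 0)
        = (n:ℂ)^(k-1) * ((n:ℂ) * ((k-1:ℕ):ℂ) * w 0) := by
      rw [show (n:ℂ)^(k-1) * ((k:ℂ) * ((n:ℂ) + (d:ℂ)) * w 0)
          = (k:ℂ) * (n:ℂ)^(k-1) * (((n:ℂ) + (d:ℂ)) * w 0) from by ring, h00, hnk]
      ring
    have hstep2 := mul_left_cancel₀ (pow_ne_zero (k-1) hn0) hstep
    have hstep3 := mul_right_cancel₀ hw0 hstep2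
    -- cast down to ℤ
    have hZ : (k:ℤ) * (n + (d:ℤ)) = n * ((k:ℤ) - 1) := by
      have : (((k:ℤ) * (n + (d:ℤ)) : ℤ) : ℂ) = ((n * ((k:ℤ) - 1) : ℤ) : ℂ) := by
        push_cast
        rw [hstep3]
        rw [Nat.cast_sub hk]
        push_cast
        ring
      exact_mod_cast this
    have hcontra : n + (k:ℤ) * (d:ℤ) = 0 := by linear_combination hZ
    exact hnz d (by push_cast; linarith [hcontra])
  -- conclude: deriv g vanishes near 0
  have hg'0 : ∀ᶠ u in 𝓝 (0:ℂ), deriv g u = 0 := by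
    filter_upwards [hGconst.eventually_nhds, hdG, hgne] with u hu hdGu hgu
    have hz : deriv G u = 0 := by
      have h2 : deriv G u = deriv (fun _ => (1:ℂ)) u := Filter.EventuallyEq.deriv_eq hu
      rw [h2, deriv_const]
    rw [hdGu] at hz
    rcases mul_eq_zero.mp hz with h | h
    · rcases mul_eq_zero.mp h with h1 | h2
      · exact absurd h1 hn0
      · exact absurd h2 (zpow_ne_zero _ hgu)
    · exact h
  obtain ⟨s1, hs1n, hs1⟩ := (hgea.and hg'0).exists_mem
  obtain ⟨r, hr0, hrs⟩ := Metric.mem_nhds_iff.mp hs1n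
  have hconst : ∀ u ∈ Metric.ball (0:ℂ) r, g u = g 0 := by
    intro u hu
    apply Convex.is_const_of_fderivWithin_eq_zero (convex_ball (0:ℂ) r)
      (fun y hy => ((hs1 y (hrs hy)).1.differentiableAt).differentiableWithinAt)
      ?_ hu (Metric.mem_ball_self hr0)
    intro y hy
    rw [fderivWithin_of_isOpen Metric.isOpen_ball hy]
    have hdy : HasDerivAt g 0 y := by
      have := (hs1 y (hrs hy)).1.differentiableAt.hasDerivAt
      rwa [(hs1 y (hrs hy)).2] at this
    have := hdy.hasFDerivAt.fderiv
    rw [this]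
    ext z
    simp
  refine ⟨part1, ?_⟩
  filter_upwards [Metric.ball_mem_nhds 0 hr0] with u hu
  rw [hfac u, hconst u hu, hg0, mul_comm]

/-- Standard coordinates for a `k`-differential germ `ξ = w^m h(w) (dw)^k` (with `h` analytic,
`h 0 = a₀ ≠ 0`) at a singularity of order `m` with `m > -k` or `k ∤ m`: there is a germ of
biholomorphism `φ` fixing `0` with `φ^* ξ = z^m (dz)^k`, and `φ` is unique up to
multiplication by an `(m+k)`-th root of unity. -/
theorem stmt13 (k : ℕ) (hk : 1 ≤ k) (m : ℤ) (hm : -(k : ℤ) < m ∨ ¬ ((k : ℤ) ∣ m))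
    (h : ℂ → ℂ) (hh : AnalyticAt ℂ h 0) (h0 : h 0 ≠ 0) :
    (∃ φ : ℂ → ℂ, AnalyticAt ℂ φ 0 ∧ φ 0 = 0 ∧ deriv φ 0 ≠ 0 ∧
      ∀ᶠ u in 𝓝[≠] (0 : ℂ), (φ u) ^ m * h (φ u) * (deriv φ u) ^ k = u ^ m) ∧
    (∀ φ₁ φ₂ : ℂ → ℂ,
      (AnalyticAt ℂ φ₁ 0 ∧ φ₁ 0 = 0 ∧ deriv φ₁ 0 ≠ 0 ∧
        ∀ᶠ u in 𝓝[≠] (0 : ℂ), (φ₁ u) ^ m * h (φ₁ u) * (deriv φ₁ u) ^ k = u ^ m) →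
      (AnalyticAt ℂ φ₂ 0 ∧ φ₂ 0 = 0 ∧ deriv φ₂ 0 ≠ 0 ∧
        ∀ᶠ u in 𝓝[≠] (0 : ℂ), (φ₂ u) ^ m * h (φ₂ u) * (deriv φ₂ u) ^ k = u ^ m) →
      ∃ ε : ℂ, ε ^ (m + (k : ℤ)) = 1 ∧ ∀ᶠ u in 𝓝 (0 : ℂ), φ₁ u = φ₂ (ε * u)) := by
  have hkZ : (1:ℤ) ≤ (k:ℤ) := by exact_mod_cast hk
  have hnz : ∀ j : ℕ, (m + (k:ℤ)) + (k:ℤ) * j ≠ 0 := by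
    intro j hj
    have hdvd : (k:ℤ) ∣ m := ⟨-(1+j), by linear_combination hj⟩
    have hkj : (0:ℤ) ≤ (k:ℤ)*j := by positivity
    rcases hm with hcase | hcase
    · linarith
    · exact hcase hdvd
  have hnZ : (m + (k:ℤ)) ≠ 0 := by simpa using hnz 0
  have hn0 : ((m + (k:ℤ) : ℤ):ℂ) ≠ 0 := Int.cast_ne_zero.mpr hnZ
  constructor
  · -- Existence
    obtain ⟨Q, hQa, hQne, hQk'⟩ := aux_root (k:ℤ)
      (by exact_mod_cast Nat.one_le_iff_ne_zero.mp hk) hh h0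
    have hQk : ∀ᶠ z in 𝓝 (0:ℂ), Q z ^ k = h z := by
      filter_upwards [hQk'] with z hz
      rw [← hz, zpow_natCast]
    obtain ⟨W, hWa, hW0, hWode⟩ := aux_ode k (m + (k:ℤ)) hnz hQa
    have hW0ne : W 0 ≠ 0 := by rw [hW0]; exact hQne 0
    obtain ⟨E, hEa, hEne, hEW⟩ := aux_root (m + (k:ℤ)) hnZ hWa hW0ne
    set T : ℂ → ℂ := fun z => z * E z ^ k with hTdef
    have hTa : AnalyticAt ℂ T 0 := analyticAt_id.mul (hEa.pow k)
    have hT0 : T 0 = 0 := by rw [hTdef]; simp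
    have hEea : ∀ᶠ z in 𝓝 (0:ℂ), AnalyticAt ℂ E z := hEa.eventually_analyticAt
    have hdT : ∀ᶠ z in 𝓝 (0:ℂ),
        deriv T z = E z ^ k + z * ((k:ℂ) * E z ^ (k-1) * deriv E z) := by
      filter_upwards [hEea] with z hz
      have h1 : HasDerivAt T (1 * E z ^ k + z * ((k:ℂ) * E z ^ (k-1) * deriv E z)) z :=
        (hasDerivAt_id z).mul (hz.differentiableAt.hasDerivAt.pow k)
      rw [h1.deriv]; ring
    have hdT0 : deriv T 0 = E 0 ^ k := by
      rw [hdT.self_of_nhds]; simp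
    have hdT0ne : deriv T 0 ≠ 0 := by rw [hdT0]; exact pow_ne_zero _ (hEne 0)
    have hWne : ∀ᶠ z in 𝓝 (0:ℂ), W z ≠ 0 := hWa.continuousAt.eventually_ne hW0ne
    have hdW : ∀ᶠ z in 𝓝 (0:ℂ),
        ((m + (k:ℤ) : ℤ):ℂ) * W z * deriv E z = E z * deriv W z := by
      filter_upwards [hEW.eventually_nhds, hEea] with z hz hEz
      have h1 : HasDerivAt (fun y => E y ^ (m + (k:ℤ)))
          (((m + (k:ℤ) : ℤ):ℂ) * E z ^ ((m + (k:ℤ)) - 1) * deriv E z) z := by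
        have := (hasDerivAt_zpow (m + (k:ℤ)) (E z) (Or.inl (hEne z))).comp z
          hEz.differentiableAt.hasDerivAt
        exact this
      have h2 : deriv W z = ((m + (k:ℤ) : ℤ):ℂ) * E z ^ ((m + (k:ℤ)) - 1) * deriv E z := by
        have hWE : (fun y => W y) =ᶠ[𝓝 z] fun y => E y ^ (m + (k:ℤ)) :=
          hz.mono fun y hy => hy.symm
        rw [Filter.EventuallyEq.deriv_eq hWE]
        exact h1.deriv
      rw [h2]
      have e0 : E z ^ (m + (k:ℤ)) = E z ^ ((m + (k:ℤ)) - 1) * E z := by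
        rw [← zpow_add_one₀ (hEne z), sub_add_cancel]
      rw [← hz.self_of_nhds, e0]
      ring
    have hK : ∀ᶠ z in 𝓝[≠] (0:ℂ), z ^ m * h z = T z ^ m * (deriv T z) ^ k := by
      filter_upwards [(hQk.and (hWode.and (hdW.and (hdT.and (hWne.and hEW))))).filter_mono
        nhdsWithin_le_nhds, eventually_mem_nhdsWithin] with z hz hz0
      obtain ⟨hQz, hOz, hWz, hTz, hWnz, hEWz⟩ := hz
      have hz0' : (z:ℂ) ≠ 0 := hz0
      have key2 : W z * (E z + (k:ℂ) * z * deriv E z) = E z * Q z := by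
        apply mul_left_cancel₀ hn0
        calc ((m + (k:ℤ) : ℤ):ℂ) * (W z * (E z + (k:ℂ)*z*deriv E z))
            = ((m + (k:ℤ) : ℤ):ℂ) * W z * E z
              + (k:ℂ) * z * (((m + (k:ℤ) : ℤ):ℂ) * W z * deriv E z) := by ring
          _ = ((m + (k:ℤ) : ℤ):ℂ) * W z * E z + (k:ℂ) * z * (E z * deriv W z) := by rw [hWz]
          _ = E z * (((m + (k:ℤ) : ℤ):ℂ) * W z + (k:ℂ) * z * deriv W z) := by ring
          _ = E z * (((m + (k:ℤ) : ℤ):ℂ) * Q z) := by rw [hOz]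
          _ = ((m + (k:ℤ) : ℤ):ℂ) * (E z * Q z) := by ring
      have hT' : deriv T z = E z ^ (k-1) * (E z + (k:ℂ) * z * deriv E z) := by
        rw [hTz]
        have hEk : E z ^ k = E z ^ (k-1) * E z := by
          rw [← pow_succ, Nat.sub_add_cancel hk]
        rw [hEk]; ring
      have hWT : W z ^ k * deriv T z ^ k = E z ^ (k*k) * h z := by
        rw [hT']
        calc W z ^ k * (E z ^ (k-1) * (E z + (k:ℂ)*z*deriv E z)) ^ k
            = (E z ^ (k-1))^k * (W z * (E z + (k:ℂ)*z*deriv E z))^k := by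
              rw [mul_pow, mul_pow]; ring
          _ = (E z ^ (k-1))^k * (E z * Q z)^k := by rw [key2]
          _ = (E z ^ (k-1))^k * E z ^ k * Q z ^ k := by rw [mul_pow]; ring
          _ = E z ^ ((k-1)*k + k) * h z := by rw [← pow_mul, ← pow_add, hQz]
          _ = E z ^ (k*k) * h z := by
              congr 2
              have : (k-1)*k + k = ((k-1)+1) * k := by ring
              rw [this, Nat.sub_add_cancel hk]
      have hTm : T z ^ m = z ^ m * (E z ^ k) ^ m := by
        rw [hTdef]; exact mul_zpow _ _ _
      have main : ((E z ^ k:ℂ)) ^ m * deriv T z ^ k = h z := by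
        apply mul_left_cancel₀ (pow_ne_zero k hWnz)
        rw [show W z ^ k * ((E z ^ k:ℂ)^m * deriv T z ^ k)
            = (E z ^ k:ℂ)^m * (W z ^ k * deriv T z ^ k) from by ring, hWT]
        have hEzk : (E z ^ k : ℂ) ^ m * E z ^ (k*k) = W z ^ k := by
          have h1 : (E z ^ k : ℂ) ^ m = E z ^ ((k:ℤ) * m) := by
            rw [← zpow_natCast (E z) k, ← zpow_mul]
          have h2 : (E z : ℂ) ^ ((k:ℤ)*(k:ℤ)) = E z ^ (k*k : ℕ) := by
            rw [← Nat.cast_mul, zpow_natCast]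
          rw [h1, ← h2, ← zpow_add₀ (hEne z)]
          have h3 : (k:ℤ)*m + (k:ℤ)*(k:ℤ) = (k:ℤ) * (m + (k:ℤ)) := by ring
          rw [h3, mul_comm, zpow_mul, hEWz, zpow_natCast]
        calc (E z ^ k:ℂ)^m * (E z ^(k*k) * h z)
            = ((E z ^ k:ℂ)^m * E z ^(k*k)) * h z := by ring
          _ = W z ^ k * h z := by rw [hEzk]
      calc z ^ m * h z = z ^ m * ((E z ^ k:ℂ)^m * deriv T z ^k) := by rw [main]
        _ = T z ^ m * deriv T z ^ k := by rw [hTm]; ring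
    obtain ⟨φ, hφa, hφ0, hφd, hleft, hright⟩ := aux_inv hTa hT0 hdT0ne
    refine ⟨φ, hφa, hφ0, hφd, ?_⟩
    have hφea : ∀ᶠ u in 𝓝 (0:ℂ), AnalyticAt ℂ φ u := hφa.eventually_analyticAt
    have hφtend : Tendsto φ (𝓝 0) (𝓝 0) := by
      have := hφa.continuousAt.tendsto
      rwa [hφ0] at this
    rw [eventually_nhdsWithin_iff] at hK
    have hKφ : ∀ᶠ u in 𝓝 (0:ℂ), φ u ∈ ({0}ᶜ : Set ℂ) →
        (φ u) ^ m * h (φ u) = T (φ u) ^ m * (deriv T (φ u)) ^ k := hφtend.eventually hK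
    have hTea : ∀ᶠ u in 𝓝 (0:ℂ), AnalyticAt ℂ T (φ u) :=
      hφtend.eventually hTa.eventually_analyticAt
    have hchain : ∀ᶠ u in 𝓝 (0:ℂ), deriv T (φ u) * deriv φ u = 1 := by
      filter_upwards [hφea, hTea, hright.eventually_nhds] with u hφu hTu hru
      have h1 : HasDerivAt (fun y => T (φ y)) (deriv T (φ u) * deriv φ u) u :=
        (hTu.differentiableAt.hasDerivAt).comp u (hφu.differentiableAt.hasDerivAt)
      have h2 := h1.deriv
      have hru' : (fun y => T (φ y)) =ᶠ[𝓝 u] fun y => y := hru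
      rw [Filter.EventuallyEq.deriv_eq hru'] at h2
      rw [← h2, deriv_id'']
    filter_upwards [hright.filter_mono nhdsWithin_le_nhds,
      hKφ.filter_mono nhdsWithin_le_nhds, hchain.filter_mono nhdsWithin_le_nhds,
      eventually_mem_nhdsWithin] with u hru hKu hchu hu0
    have hu0' : (u:ℂ) ≠ 0 := hu0
    have hφne : φ u ∈ ({0}ᶜ : Set ℂ) := by
      intro hq
      simp only [Set.mem_singleton_iff] at hq
      apply hu0'
      rw [← hru, hq, hT0]
    have hP := hKu hφne
    rw [hru] at hP
    calc φ u ^ m * h (φ u) * deriv φ u ^ k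
        = (u ^ m * deriv T (φ u) ^ k) * deriv φ u ^ k := by rw [← hP]
      _ = u ^ m * (deriv T (φ u) * deriv φ u)^k := by rw [mul_pow]; ring
      _ = u ^ m := by rw [hchu, one_pow, mul_one]
  · -- Uniqueness
    rintro φ₁ φ₂ ⟨h1a, h10, h1d, h1e⟩ ⟨h2a, h20, h2d, h2e⟩
    obtain ⟨χ, hχa, hχ0, hχd, hχl, hχr⟩ := aux_inv h2a h20 h2d
    obtain ⟨χ₁, hχ₁a, hχ₁0, hχ₁d, hχ₁l, hχ₁r⟩ := aux_inv h1a h10 h1d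
    set ψ : ℂ → ℂ := fun u => χ (φ₁ u) with hψdef
    have h1tend : Tendsto φ₁ (𝓝 0) (𝓝 0) := by
      have := h1a.continuousAt.tendsto
      rwa [h10] at this
    have hψa : AnalyticAt ℂ ψ 0 := (h10 ▸ hχa).comp h1a
    have hψ0 : ψ 0 = 0 := by
      show χ (φ₁ 0) = 0
      rw [h10, hχ0]
    have hinv : ∀ᶠ u in 𝓝 (0:ℂ), φ₂ (ψ u) = φ₁ u := h1tend.eventually hχr
    have hψea := hψa.eventually_analyticAt
    have h2ea := h2a.eventually_analyticAt
    have hψtend : Tendsto ψ (𝓝 0) (𝓝 0) := by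
      have := hψa.continuousAt.tendsto
      rwa [hψ0] at this
    have hchain : ∀ᶠ u in 𝓝 (0:ℂ), deriv φ₂ (ψ u) * deriv ψ u = deriv φ₁ u := by
      filter_upwards [hψea, hψtend.eventually h2ea, hinv.eventually_nhds] with u hψu h2u hru
      have hc : HasDerivAt (fun y => φ₂ (ψ y)) (deriv φ₂ (ψ u) * deriv ψ u) u :=
        (h2u.differentiableAt.hasDerivAt).comp u hψu.differentiableAt.hasDerivAt
      have h2' := hc.deriv
      have hru' : (fun y => φ₂ (ψ y)) =ᶠ[𝓝 u] φ₁ := hru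
      rw [Filter.EventuallyEq.deriv_eq hru'] at h2'
      exact h2'.symm
    have hψd : deriv ψ 0 ≠ 0 := by
      have hch0 := hchain.self_of_nhds
      intro hz
      rw [hψ0, hz, mul_zero] at hch0
      exact h1d hch0.symm
    rw [eventually_nhdsWithin_iff] at h2e
    have hψeq : ∀ᶠ u in 𝓝[≠] (0:ℂ), ψ u ^ m * (deriv ψ u)^k = u ^ m := by
      filter_upwards [h1e, hchain.filter_mono nhdsWithin_le_nhds,
        hinv.filter_mono nhdsWithin_le_nhds,
        (hψtend.eventually h2e).filter_mono nhdsWithin_le_nhds,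
        hχ₁l.filter_mono nhdsWithin_le_nhds,
        eventually_mem_nhdsWithin] with u h1u hchu hinvu h2u hl2u hu0
      have hu0' : (u:ℂ) ≠ 0 := hu0
      have hφ1ne : φ₁ u ≠ 0 := by
        intro hq
        apply hu0'
        have hcc : χ₁ (φ₁ u) = u := hl2u
        rw [hq, hχ₁0] at hcc
        exact hcc.symm
      have hψne : ψ u ∈ ({0}ᶜ : Set ℂ) := by
        intro hq
        simp only [Set.mem_singleton_iff] at hq
        apply hφ1ne
        rw [← hinvu, hq, h20]
      have hP := h2u hψne
      rw [← h1u, ← hinvu, ← hchu, mul_pow]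
      linear_combination (-(deriv ψ u ^ k)) * hP
    obtain ⟨hroot, hlin⟩ := aux_rigid k hk m hnz hψa hψ0 hψd hψeq
    refine ⟨deriv ψ 0, hroot, ?_⟩
    filter_upwards [hlin, hinv] with u hu1 hu2
    rw [← hu2, hu1]
end

section
/- Let k ≥ 1 and let ξ = w^{−k}(a_0 + a_1 w + ⋯)(dw)^k be a k-differential germ at 0 with a_0 ≠ 0 (convergent power series). Then there exists a germ of biholomorphism φ fixing 0 and a nonzero complex number r such that φ*(ξ) = (r/z^k)(dz)^k; the number r is uniquely determined by ξ (independent of φ). -/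
open Topology Filter

open FormalMultilinearSeries in
lemma exists_primitive {Q : ℂ → ℂ} (hQ : AnalyticAt ℂ Q 0) :
    ∃ P : ℂ → ℂ, AnalyticAt ℂ P 0 ∧ P 0 = 0 ∧ ∀ᶠ w in 𝓝 (0:ℂ), HasDerivAt P (Q w) w := by
  obtain ⟨q, r, hr⟩ := hQ
  let c : ℕ → ℂ := fun n => match n with | 0 => 0 | m+1 => q.coeff m / (m+1)
  have hc0 : c 0 = 0 := rfl
  have hcs : ∀ m, c (m+1) = q.coeff m / (m+1) := fun m => rfl
  let p : FormalMultilinearSeries ℂ ℂ ℂ := ofScalars ℂ c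
  have hpc : ∀ n, p n = ofScalars ℂ c n := fun n => rfl
  have happ : ∀ (n : ℕ) (y : ℂ), (p n fun _ => y) = c n * y ^ n := by
    intro n y
    rw [hpc, ofScalars_apply_eq, smul_eq_mul]
  have hcoe : ∀ n, p.coeff n = c n := by
    intro n
    rw [FormalMultilinearSeries.coeff, show (1 : Fin n → ℂ) = fun _ => (1:ℂ) from rfl,
      happ, one_pow, mul_one]
  have hrad : r ≤ p.radius := by
    apply ENNReal.le_of_forall_nnreal_lt
    intro r' hr'
    obtain ⟨C, hC, hb⟩ := q.norm_mul_pow_le_of_lt_radius (hr'.trans_le hr.r_le)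
    apply p.le_radius_of_bound (max C (C * r'))
    intro n
    have hnorm : ∀ n, ‖p n‖ = ‖c n‖ := by
      intro n; rw [p.norm_apply_eq_norm_coef, hcoe]
    match n with
    | 0 => simpa [hnorm, hc0] using le_max_of_le_left hC.le
    | Nat.succ m =>
      refine le_max_of_le_right ?_
      have h1 : ‖p (m+1)‖ ≤ ‖q m‖ := by
        rw [hnorm, q.norm_apply_eq_norm_coef, hcs, norm_div]
        have h2 : (1:ℝ) ≤ ‖((m:ℂ)+1)‖ := by
          have : ((m:ℂ)+1) = ((m+1 : ℕ) : ℂ) := by push_cast; ring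
          rw [this, Complex.norm_natCast]
          exact_mod_cast Nat.le_add_left 1 m
        calc ‖q.coeff m‖ / ‖(m:ℂ)+1‖ ≤ ‖q.coeff m‖ / 1 := by
              gcongr
          _ = ‖q.coeff m‖ := div_one _
      calc ‖p (m+1)‖ * (r':ℝ)^(m+1) ≤ ‖q m‖ * ((r':ℝ)^m * r') := by
            rw [pow_succ]
            gcongr
        _ = ‖q m‖ * (r':ℝ)^m * r' := by ring
        _ ≤ C * r' := by gcongr; exact hb m
  have hP : HasFPowerSeriesOnBall p.sum p 0 r :=
    (p.hasFPowerSeriesOnBall (lt_of_lt_of_le hr.r_pos hrad)).mono hr.r_pos hrad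
  refine ⟨p.sum, hP.analyticAt, ?_, ?_⟩
  · have hterm : ∀ n, (p n fun _ => (0:ℂ)) = 0 := by
      intro n
      rw [happ]
      cases n with
      | zero => rw [hc0]; ring
      | succ m => simp
    simp only [FormalMultilinearSeries.sum, hterm, tsum_zero]
  · have hball : Metric.eball (0:ℂ) r ∈ 𝓝 (0:ℂ) :=
      Metric.eball_mem_nhds 0 hr.r_pos
    filter_upwards [hball] with y hy
    have hyan : AnalyticAt ℂ p.sum y := hP.analyticAt_of_mem (by simpa [Metric.mem_eball, edist_zero_right] using hy)
    rcases eq_or_ne y 0 with rfl | hy0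
    · have hder : deriv p.sum 0 = Q 0 := by
        rw [hP.hasFPowerSeriesAt.deriv]
        have hq0 : q 0 (fun _ => (0:ℂ)) = Q 0 := by
          simpa using hr.hasFPowerSeriesAt.coeff_zero (fun _ => 0)
        have : q 0 (fun _ => (0:ℂ)) = q.coeff 0 := by
          rw [apply_eq_pow_smul_coeff]; simp
        rw [happ, hcs, ← hq0, this]
        push_cast
        simp
      rw [← hder]
      exact hyan.differentiableAt.hasDerivAt
    · have hkey : deriv p.sum y * y = y * Q y := by
        have h1 := hP.fderiv.hasSum (y := y) (by simpa [Metric.mem_eball, edist_zero_right] using hy)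
        rw [zero_add] at h1
        have h2 := (ContinuousLinearMap.apply ℂ ℂ y).hasSum h1
        have h3 : HasSum (fun n => y * (q n fun _ => y)) (y * Q y) := by
          have := (hr.hasSum (y := y) (by simpa [Metric.mem_eball, edist_zero_right] using hy)).mul_left y
          rwa [zero_add] at this
        have heq : ∀ n, (ContinuousLinearMap.apply ℂ ℂ y) (p.derivSeries n fun _ => y)
            = y * (q n fun _ => y) := by
          intro n
          rw [ContinuousLinearMap.apply_apply, derivSeries_apply_diag, happ,
            apply_eq_pow_smul_coeff, hcs, smul_eq_mul, nsmul_eq_mul]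
          have hne : ((n:ℂ)+1) ≠ 0 := Nat.cast_add_one_ne_zero n
          push_cast
          field_simp
          ring
        rw [funext heq] at h2
        have h4 := h2.unique h3
        rw [ContinuousLinearMap.apply_apply] at h4
        rw [← h4]
        have hs : (fderiv ℂ p.sum y) y = deriv p.sum y * y := by
          calc (fderiv ℂ p.sum y) y = (fderiv ℂ p.sum y) (y • 1) := by
                rw [smul_eq_mul, mul_one]
            _ = y • (fderiv ℂ p.sum y) 1 := map_smul _ _ _
            _ = deriv p.sum y * y := by rw [smul_eq_mul, fderiv_apply_one_eq_deriv, mul_comm]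
        rw [hs]
      have hder : deriv p.sum y = Q y := by
        have := mul_right_cancel₀ hy0 (by rw [hkey]; ring : deriv p.sum y * y = Q y * y)
        exact this
      rw [← hder]
      exact hyan.differentiableAt.hasDerivAt


/-- Standard coordinates at a pole of order exactly `k`: for a `k`-differential germ
`ξ = w^{-k} h(w) (dw)^k` with `h` analytic and `h 0 = a₀ ≠ 0`, there is a germ of
biholomorphism `φ` fixing `0` and a nonzero `r ∈ ℂ` (the `k`-residue) with
`φ^* ξ = (r / z^k) (dz)^k`; moreover `r` is uniquely determined by `ξ`. -/
theorem stmt14 (k : ℕ) (hk : 1 ≤ k)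
    (h : ℂ → ℂ) (hh : AnalyticAt ℂ h 0) (h0 : h 0 ≠ 0) :
    ∃ (φ : ℂ → ℂ) (r : ℂ), r ≠ 0 ∧ AnalyticAt ℂ φ 0 ∧ φ 0 = 0 ∧ deriv φ 0 ≠ 0 ∧
      (∀ᶠ u in 𝓝[≠] (0 : ℂ), h (φ u) / (φ u) ^ k * (deriv φ u) ^ k = r / u ^ k) ∧
      ∀ (φ' : ℂ → ℂ) (r' : ℂ), AnalyticAt ℂ φ' 0 → φ' 0 = 0 → deriv φ' 0 ≠ 0 →
        (∀ᶠ u in 𝓝[≠] (0 : ℂ), h (φ' u) / (φ' u) ^ k * (deriv φ' u) ^ k = r' / u ^ k) →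
        r' = r := by
  classical
  set a := h 0 with ha
  have hkC : (k : ℂ) ≠ 0 := Nat.cast_ne_zero.mpr (by omega)
  -- the k-th root G of h/a
  have hH : AnalyticAt ℂ (fun w => h w / a) 0 := hh.div analyticAt_const h0
  have hH0 : h 0 / a = 1 := div_self h0
  have hL : AnalyticAt ℂ (fun w => Complex.log (h w / a)) 0 :=
    hH.clog (by simpa [hH0] using Complex.one_mem_slitPlane)
  set G : ℂ → ℂ := fun w => Complex.exp (Complex.log (h w / a) / k) with hGdef
  have hG : AnalyticAt ℂ G 0 := (hL.div analyticAt_const hkC).cexp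
  have hG0 : G 0 = 1 := by simp [hGdef, hH0]
  have hGne : ∀ w, G w ≠ 0 := fun w => Complex.exp_ne_zero _
  have hne : ∀ᶠ w in 𝓝 (0:ℂ), h w ≠ 0 := hh.continuousAt.eventually_ne h0
  have hGk : ∀ᶠ w in 𝓝 (0:ℂ), G w ^ k = h w / a := by
    filter_upwards [hne] with w hw
    rw [hGdef]
    rw [← Complex.exp_nat_mul]
    rw [mul_div_cancel₀ _ hkC, Complex.exp_log (div_ne_zero hw h0)]
  -- Q = dslope G 0, so that 1 + w * Q w = G w
  have hQ : AnalyticAt ℂ (dslope G 0) 0 := by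
    obtain ⟨g, hg⟩ := hG
    exact ⟨g.fslope, hg.has_fpower_series_dslope_fslope⟩
  have hOne : ∀ w, 1 + w * dslope G 0 w = G w := by
    intro w
    rcases eq_or_ne w 0 with rfl | hw
    · simp [hG0]
    · rw [dslope_of_ne _ hw, slope_def_field]
      field_simp [hG0]
      rw [hG0]; ring
  obtain ⟨P, hPan, hP0, hPd⟩ := exists_primitive hQ
  set ψ : ℂ → ℂ := fun w => w * Complex.exp (P w) with hψdef
  have hψan : AnalyticAt ℂ ψ 0 := analyticAt_id.mul hPan.cexp
  have hψ0 : ψ 0 = 0 := by simp [hψdef]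
  set D : ℂ → ℂ := fun w => Complex.exp (P w) * G w with hDdef
  have hD0 : D 0 = 1 := by simp [hDdef, hP0, hG0]
  have hψd : ∀ᶠ w in 𝓝 (0:ℂ), HasDerivAt ψ (D w) w := by
    filter_upwards [hPd] with w hw
    have h1 : HasDerivAt (fun w => Complex.exp (P w)) (Complex.exp (P w) * dslope G 0 w) w :=
      hw.cexp
    have h2 : HasDerivAt (fun w => w * Complex.exp (P w))
        (1 * Complex.exp (P w) + w * (Complex.exp (P w) * dslope G 0 w)) w :=
      (hasDerivAt_id w).mul h1
    convert h2 using 1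
    show Complex.exp (P w) * G w = 1 * Complex.exp (P w) + w * (Complex.exp (P w) * dslope G 0 w)
    rw [← hOne w]
    ring
  have hψd0 : HasDerivAt ψ 1 0 := by
    have := hψd.self_of_nhds
    rwa [hD0] at this
  have hψderiv0 : deriv ψ 0 = 1 := hψd0.deriv
  have hstrict : HasStrictDerivAt ψ 1 0 := by
    have := hψan.hasStrictFDerivAt.hasStrictDerivAt
    rwa [fderiv_apply_one_eq_deriv, hψderiv0] at this
  have he := hstrict.hasStrictFDerivAt_equiv one_ne_zero
  set F := he.toOpenPartialHomeomorph ψ with hF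
  have hFcoe : ⇑F = ψ := he.toOpenPartialHomeomorph_coe
  set φ : ℂ → ℂ := ⇑F.symm with hφdef
  have hsrc : (0:ℂ) ∈ F.source := he.mem_toOpenPartialHomeomorph_source
  have htgt : (0:ℂ) ∈ F.target := by
    have := he.image_mem_toOpenPartialHomeomorph_target
    rwa [hψ0] at this
  have htgt_nhds : F.target ∈ 𝓝 (0:ℂ) := F.open_target.mem_nhds htgt
  have hφ0 : φ 0 = 0 := by
    have := F.left_inv hsrc
    rwa [hFcoe, hψ0] at this
  have hφcont : ContinuousAt φ 0 := F.continuousAt_symm htgt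
  have hrinv : ∀ u ∈ F.target, ψ (φ u) = u := by
    intro u hu
    have := F.right_inv hu
    rwa [hFcoe] at this
  -- good set of w's
  have hDcont : ContinuousAt D 0 :=
    (Complex.continuous_exp.continuousAt.comp hPan.continuousAt).mul hG.continuousAt
  have hDne : ∀ᶠ w in 𝓝 (0:ℂ), D w ≠ 0 := hDcont.eventually_ne (by rw [hD0]; exact one_ne_zero)
  have hV : ∀ᶠ w in 𝓝 (0:ℂ),
      HasDerivAt ψ (D w) w ∧ D w ≠ 0 ∧ h w ≠ 0 ∧ G w ^ k = h w / a := by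
    filter_upwards [hψd, hDne, hne, hGk] with w h1 h2 h3 h4 using ⟨h1, h2, h3, h4⟩
  have hpre : {u : ℂ | HasDerivAt ψ (D (φ u)) (φ u) ∧ D (φ u) ≠ 0 ∧ h (φ u) ≠ 0 ∧
      G (φ u) ^ k = h (φ u) / a} ∈ 𝓝 (0:ℂ) := by
    have : Filter.Tendsto φ (𝓝 0) (𝓝 0) := by
      have := hφcont.tendsto
      rwa [hφ0] at this
    exact this.eventually hV
  have hs : (F.target ∩ {u : ℂ | HasDerivAt ψ (D (φ u)) (φ u) ∧ D (φ u) ≠ 0 ∧ h (φ u) ≠ 0 ∧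
      G (φ u) ^ k = h (φ u) / a}) ∈ 𝓝 (0:ℂ) := Filter.inter_mem htgt_nhds hpre
  have hder : ∀ u ∈ (F.target ∩ {u : ℂ | HasDerivAt ψ (D (φ u)) (φ u) ∧ D (φ u) ≠ 0 ∧
      h (φ u) ≠ 0 ∧ G (φ u) ^ k = h (φ u) / a}),
      HasDerivAt φ (D (φ u))⁻¹ u := by
    rintro u ⟨hu1, hw1, hw2, -, -⟩
    refine HasDerivAt.of_local_left_inverse (F.continuousAt_symm hu1) hw1 hw2 ?_
    filter_upwards [F.open_target.mem_nhds hu1] with v hv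
    exact hrinv v hv
  have hφan : AnalyticAt ℂ φ 0 :=
    DifferentiableOn.analyticAt
      (fun u hu => ((hder u hu).differentiableAt).differentiableWithinAt) hs
  have hφderiv0 : deriv φ 0 = 1 := by
    have := (hder 0 (mem_of_mem_nhds hs)).deriv
    rw [this, hφ0, hD0, inv_one]
  -- uniqueness computation: any valid pair has r' = a
  have huniq : ∀ (φ' : ℂ → ℂ) (r' : ℂ), AnalyticAt ℂ φ' 0 → φ' 0 = 0 → deriv φ' 0 ≠ 0 →
      (∀ᶠ u in 𝓝[≠] (0 : ℂ), h (φ' u) / (φ' u) ^ k * (deriv φ' u) ^ k = r' / u ^ k) →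
      r' = a := by
    intro φ' r' han h'0 hd' heq
    set d := deriv φ' 0 with hd
    have hDA : HasDerivAt φ' d 0 := han.differentiableAt.hasDerivAt
    have T1 : Filter.Tendsto (fun u => φ' u / u) (𝓝[≠] (0:ℂ)) (𝓝 d) := by
      have := hasDerivAt_iff_tendsto_slope.mp hDA
      refine this.congr' ?_
      filter_upwards [self_mem_nhdsWithin] with u (hu : u ≠ 0)
      rw [slope_def_field, h'0]
      field_simp
      ring
    have T2 : Filter.Tendsto (fun u => u / φ' u) (𝓝[≠] (0:ℂ)) (𝓝 d⁻¹) := by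
      refine (T1.inv₀ hd').congr ?_
      intro u
      rw [inv_div]
    have T3 : Filter.Tendsto (fun u => deriv φ' u) (𝓝[≠] (0:ℂ)) (𝓝 d) := by
      have hc : ContinuousAt (fun u => fderiv ℂ φ' u 1) 0 :=
        ((ContinuousLinearMap.apply ℂ ℂ (1:ℂ)).continuous.continuousAt).comp
          han.fderiv.continuousAt
      have : Filter.Tendsto (fun u => deriv φ' u) (𝓝 (0:ℂ)) (𝓝 d) := by
        have := hc.tendsto
        simp only [fderiv_apply_one_eq_deriv] at this
        exact this
      exact this.mono_left nhdsWithin_le_nhds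
    have T4 : Filter.Tendsto (fun u => h (φ' u)) (𝓝[≠] (0:ℂ)) (𝓝 a) := by
      have h1 : Filter.Tendsto φ' (𝓝 (0:ℂ)) (𝓝 0) := by
        have := han.continuousAt.tendsto
        rwa [h'0] at this
      exact (hh.continuousAt.tendsto.comp h1).mono_left nhdsWithin_le_nhds
    have hnz : ∀ᶠ u in 𝓝[≠] (0:ℂ), φ' u ≠ 0 := by
      rcases han.eventually_eq_zero_or_eventually_ne_zero with hcase | hcase
      · exfalso
        apply hd'
        have : φ' =ᶠ[𝓝 (0:ℂ)] (fun _ => 0) := hcase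
        rw [hd, this.deriv_eq, deriv_const]
      · exact hcase
    have TL : Filter.Tendsto (fun u => h (φ' u) * ((u / φ' u) * deriv φ' u) ^ k)
        (𝓝[≠] (0:ℂ)) (𝓝 a) := by
      have := T4.mul ((T2.mul T3).pow k)
      rwa [inv_mul_cancel₀ hd', one_pow, mul_one] at this
    have hEv : (fun u => h (φ' u) * ((u / φ' u) * deriv φ' u) ^ k)
        =ᶠ[𝓝[≠] (0:ℂ)] (fun _ => r') := by
      filter_upwards [heq, hnz, self_mem_nhdsWithin] with u hu h1 (h2 : u ≠ 0)
      have hu' : h (φ' u) / (φ' u) ^ k * (deriv φ' u) ^ k * u ^ k = r' := by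
        rw [hu]
        field_simp
      rw [← hu']
      field_simp
      rw [div_pow, mul_assoc, div_mul_cancel₀ _ (pow_ne_zero k h1), mul_pow]
      ring
    have : Filter.Tendsto (fun _ : ℂ => r') (𝓝[≠] (0:ℂ)) (𝓝 a) := TL.congr' hEv
    exact tendsto_nhds_unique tendsto_const_nhds this
  refine ⟨φ, a, h0, hφan, hφ0, by rw [hφderiv0]; exact one_ne_zero, ?_, ?_⟩
  · filter_upwards [eventually_nhdsWithin_of_eventually_nhds hs, self_mem_nhdsWithin]
      with u hu (hu0 : u ≠ 0)
    obtain ⟨hu1, hw1, hw2, hw3, hw4⟩ := hu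
    have hru : ψ (φ u) = u := hrinv u hu1
    have hwne : φ u ≠ 0 := by
      intro hc
      apply hu0
      rw [← hru, hc, hψ0]
    have hdu : deriv φ u = (D (φ u))⁻¹ := (hder u ⟨hu1, hw1, hw2, hw3, hw4⟩).deriv
    rw [hdu]
    conv_rhs => rw [← hru]
    have hhw : h (φ u) = a * G (φ u) ^ k := by
      rw [eq_div_iff h0] at hw4
      rw [← hw4]
      ring
    rw [hhw, hψdef, hDdef]
    simp only []
    have he1 : Complex.exp (P (φ u)) ≠ 0 := Complex.exp_ne_zero _
    have hgk : G (φ u) ^ k ≠ 0 := pow_ne_zero _ (hGne _)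
    have hek : Complex.exp (P (φ u)) ^ k ≠ 0 := pow_ne_zero _ he1
    have hwk : φ u ^ k ≠ 0 := pow_ne_zero _ hwne
    rw [mul_inv, mul_pow, inv_pow, inv_pow, mul_pow]
    field_simp [hgk, hek, hwk]
  · intro φ' r' h1 h2 h3 h4
    exact huniq φ' r' h1 h2 h3 h4
end

section
/- Let k ≥ 1 and suppose a connected component Y of the upper-level subcurve has a normalized degree-k cyclic cover Ŷ → Y with deck transformation τ of order k and twisted abelian differential ω̂ satisfying τ*ω̂ = ζω̂ (ζ a primitive k-th root of unity), such that Ŷ has r < k connected components. Then r divides k, and for any connected component Ŷ₁ of Ŷ, the sum of residues of ω̂ at the down-pointing nodes of Ŷ₁ equals zero. (Proposition 5.1: the global residue condition imposed by Ŷ is automatically satisfied.) -/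
/-- Proposition 5.1 (combinatorial form): `Q` is the set of lower-level nodes of the
normalized cover `Ŷ`, `τ` the order-`k` deck transformation, `res` the residues of `ω̂`
(so `res (τ q) = ζ res q` since `τ^* ω̂ = ζ ω̂`), `C` the set of connected components of `Ŷ`,
`σ` the induced permutation of components (transitive, since the deck group acts transitively).
If `Ŷ` has `r < k` components, then `r ∣ k` and on each component the residues of `ω̂` at its
down-pointing nodes sum to zero: the global residue condition is automatic. -/
theorem stmt16 (k : ℕ) (hk : 1 ≤ k) (ζ : ℂ) (hζ : IsPrimitiveRoot ζ k)
    (Q : Type*) [Fintype Q] (C : Type*) [Fintype C] [Nonempty C] [DecidableEq C]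
    (τ : Equiv.Perm Q) (hτ : τ ^ k = 1)
    (σ : Equiv.Perm C) (hσ : σ ^ k = 1)
    (comp : Q → C) (hcomp : ∀ q, comp (τ q) = σ (comp q))
    (htrans : ∀ c c' : C, ∃ i : ℕ, (σ ^ i) c = c')
    (r : ℕ) (hr : r = Fintype.card C) (hrk : r < k)
    (res : Q → ℂ) (hres : ∀ q, res (τ q) = ζ * res q) :
    r ∣ k ∧ ∀ c : C, ∑ q ∈ Finset.univ.filter (fun q => comp q = c), res q = 0 := by
  obtain ⟨c₀⟩ := (inferInstance : Nonempty C)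
  -- compatibility of powers
  have hcomp_pow : ∀ (n : ℕ) (q : Q), comp ((τ ^ n) q) = (σ ^ n) (comp q) := by
    intro n
    induction n with
    | zero => intro q; simp
    | succ n ih =>
      intro q
      simp only [pow_succ, Equiv.Perm.mul_apply]
      rw [ih, hcomp]
  have hres_pow : ∀ (n : ℕ) (q : Q), res ((τ ^ n) q) = ζ ^ n * res q := by
    intro n
    induction n with
    | zero => intro q; simp
    | succ n ih =>
      intro q
      simp only [pow_succ, Equiv.Perm.mul_apply]
      rw [ih, hres]
      ring
  -- minimal period d of c₀
  have hexists : ∃ d, 0 < d ∧ (σ ^ d) c₀ = c₀ := ⟨k, hk, by rw [hσ]; rfl⟩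
  set d := Nat.find hexists with hd_def
  obtain ⟨hdpos, hdfix⟩ := Nat.find_spec hexists
  have hmin : ∀ m, m < d → ¬(0 < m ∧ (σ ^ m) c₀ = c₀) := fun m hm => Nat.find_min hexists hm
  have hmul : ∀ m : ℕ, (σ ^ (d * m)) c₀ = c₀ := by
    intro m
    induction m with
    | zero => simp
    | succ m ih =>
      have : d * (m + 1) = d * m + d := by ring
      rw [this, pow_add, Equiv.Perm.mul_apply, hdfix, ih]
  have hdvd : ∀ n : ℕ, (σ ^ n) c₀ = c₀ → d ∣ n := by
    intro n hn
    have hmod : (σ ^ (n % d)) c₀ = c₀ := by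
      have h1 : n % d + d * (n / d) = n := Nat.mod_add_div n d
      have h2 : (σ ^ n) c₀ = (σ ^ (n % d)) ((σ ^ (d * (n / d))) c₀) := by
        conv_lhs => rw [← h1]
        rw [pow_add, Equiv.Perm.mul_apply]
      rw [hmul, hn] at h2
      exact h2.symm
    by_contra hnd
    have hpos : 0 < n % d := Nat.pos_of_ne_zero (fun h0 => hnd (Nat.dvd_of_mod_eq_zero h0))
    exact hmin (n % d) (Nat.mod_lt n hdpos) ⟨hpos, hmod⟩
  -- the orbit of c₀ has exactly d elements and equals C
  have hsurj : ∀ c : C, ∃ i, i < d ∧ (σ ^ i) c₀ = c := by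
    intro c
    obtain ⟨i, hi⟩ := htrans c₀ c
    refine ⟨i % d, Nat.mod_lt i hdpos, ?_⟩
    have h1 : i % d + d * (i / d) = i := Nat.mod_add_div i d
    calc (σ ^ (i % d)) c₀ = (σ ^ (i % d)) ((σ ^ (d * (i / d))) c₀) := by rw [hmul]
      _ = (σ ^ i) c₀ := by rw [← Equiv.Perm.mul_apply, ← pow_add, h1]
      _ = c := hi
  have hinj : ∀ i j, i < d → j < d → (σ ^ i) c₀ = (σ ^ j) c₀ → i = j := by
    have key : ∀ i j, i ≤ j → j < d → (σ ^ i) c₀ = (σ ^ j) c₀ → i = j := by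
      intro i j hij hjd h
      by_contra hne
      have hlt : i < j := lt_of_le_of_ne hij hne
      have hfix : (σ ^ (j - i)) c₀ = c₀ := by
        have : (σ ^ i) ((σ ^ (j - i)) c₀) = (σ ^ i) c₀ := by
          rw [← Equiv.Perm.mul_apply, ← pow_add, Nat.add_sub_cancel' hij, h]
        exact (σ ^ i).injective this
      exact hmin (j - i) (lt_of_le_of_lt (Nat.sub_le j i) hjd)
        ⟨Nat.sub_pos_of_lt hlt, hfix⟩
    intro i j hi hj h
    rcases le_total i j with hle | hle
    · exact key i j hle hj h
    · exact (key j i hle hi h.symm).symm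
  -- card C = d
  have hcard : Fintype.card C = d := by
    have himg : (Finset.range d).image (fun i => (σ ^ i) c₀) = Finset.univ := by
      apply Finset.eq_univ_iff_forall.mpr
      intro c
      obtain ⟨i, hid, hi⟩ := hsurj c
      exact Finset.mem_image.mpr ⟨i, Finset.mem_range.mpr hid, hi⟩
    have hcardimg : ((Finset.range d).image (fun i => (σ ^ i) c₀)).card = d := by
      rw [Finset.card_image_of_injOn, Finset.card_range]
      intro i hi j hj h
      exact hinj i j (Finset.mem_range.mp hi) (Finset.mem_range.mp hj) h
    rw [← Finset.card_univ, ← himg, hcardimg]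
  have hrd : r = d := by rw [hr, hcard]
  have hrfix0 : (σ ^ r) c₀ = c₀ := by rw [hrd]; exact hdfix
  have hrfix : ∀ c : C, (σ ^ r) c = c := by
    intro c
    obtain ⟨i, _, hi⟩ := hsurj c
    calc (σ ^ r) c = (σ ^ r) ((σ ^ i) c₀) := by rw [hi]
      _ = (σ ^ (r + i)) c₀ := by rw [pow_add, Equiv.Perm.mul_apply]
      _ = (σ ^ (i + r)) c₀ := by rw [Nat.add_comm]
      _ = (σ ^ i) ((σ ^ r) c₀) := by rw [pow_add, Equiv.Perm.mul_apply]
      _ = c := by rw [hrfix0, hi]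
  have hrk_dvd : r ∣ k := by
    rw [hrd]
    exact hdvd k (by rw [hσ]; rfl)
  refine ⟨hrk_dvd, ?_⟩
  intro c
  have hrpos : 0 < r := by rw [hr]; exact Fintype.card_pos
  have hζr : ζ ^ r ≠ 1 := hζ.pow_ne_one_of_pos_of_lt hrpos.ne' hrk
  set s := Finset.univ.filter (fun q => comp q = c) with hs_def
  have hmem : ∀ q : Q, q ∈ s ↔ (τ ^ r) q ∈ s := by
    intro q
    simp only [hs_def, Finset.mem_filter, Finset.mem_univ, true_and]
    rw [hcomp_pow]
    constructor
    · intro h; rw [h]; exact hrfix c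
    · intro h
      apply (σ ^ r).injective
      rw [h, hrfix c]
  have key : ∑ q ∈ s, res ((τ ^ r) q) = ∑ q ∈ s, res q :=
    Finset.sum_equiv (τ ^ r : Equiv.Perm Q) hmem (fun i _ => rfl)
  have key2 : (ζ ^ r) * ∑ q ∈ s, res q = ∑ q ∈ s, res q := by
    rw [Finset.mul_sum, ← key]
    exact Finset.sum_congr rfl (fun q _ => (hres_pow r q).symm)
  have : (ζ ^ r - 1) * ∑ q ∈ s, res q = 0 := by
    rw [sub_mul, one_mul, key2, sub_self]
  rcases mul_eq_zero.mp this with h | h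
  · exact absurd (by linear_combination h : ζ ^ r = 1) hζr
  · exact h
end
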